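/- Let p be real with 1/8 ≤ p < 7/8. Then the sequence D_n(p) converges to 0 as n → ∞. -/
import Mathlib


open Filter

private lemma fitch_aux_sq {c : ℝ} (h1 : -(1/10) ≤ c) (h2 : c ≤ 1/3) :
    (1+c)^2 ≤ 16/9 := by nlinarith

private lemma fitch_aux_easy_sq {c : ℝ} (h1 : 0 ≤ c) (h2 : c ≤ 1/2) :
    (1+c)^2 ≤ 9/4 := by nlinarith

private lemma fitch_aux_key {c d : ℝ} (hx : (c - 1/3)^2 ≤ 1083/6400)
    (hd : d^2 ≤ 1) : 3*d^2 ≤ (361/100)*(1+c)^2 := by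
  nlinarith [sq_nonneg (c + 2/25)]

set_option maxHeartbeats 2000000 in
/-- For 1/8 ≤ p < 7/8, D_n converges to 0. -/
theorem fitch_D_tendsto_zero
    (p : ℝ) (C D : ℕ → ℝ)
    (hC0 : C 0 = 0) (hD0 : D 0 = 1)
    (hC : ∀ n, 2 * C (n + 1) =
        1 - 2 * C n + 3 * (C n) ^ 2 - (2 * p - 1) ^ 2 * (D n) ^ 2)
    (hD : ∀ n, D (n + 1) = (2 * p - 1) * (1 + C n) * D n)
    (hp1 : 1 / 8 ≤ p) (hp2 : p < 7 / 8) :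
    Tendsto D atTop (nhds 0) := by
  have hθ1 : -(3/4 : ℝ) ≤ 2*p - 1 := by linarith
  have hθ2 : (2*p - 1 : ℝ) < 3/4 := by linarith
  have hθsq : (2*p-1)^2 ≤ 9/16 := by nlinarith
  -- it suffices to show D n ^ 2 → 0
  suffices hs : Tendsto (fun n => (D n)^2) atTop (nhds 0) by
    have h1 : Tendsto (fun n => Real.sqrt ((D n)^2)) atTop (nhds (Real.sqrt 0)) :=
      (Real.continuous_sqrt.tendsto 0).comp hs
    simp only [Real.sqrt_zero, Real.sqrt_sq_eq_abs] at h1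
    rw [tendsto_zero_iff_norm_tendsto_zero]
    simpa [Real.norm_eq_abs] using h1
  rcases lt_or_ge ((2*p-1)^2) (4/9) with heasy | hhard
  · -- easy case : |2p-1| < 2/3, geometric decay
    have hinv : ∀ n, 0 ≤ C n ∧ C n ≤ 1/2 ∧ (D n)^2 ≤ 1 := by
      intro n
      induction n with
      | zero => refine ⟨by rw [hC0], by rw [hC0]; norm_num, by rw [hD0]; norm_num⟩
      | succ n ih =>
        obtain ⟨h0, h1, h2⟩ := ih
        have hc := hC n
        have htd : (2*p-1)^2*(D n)^2 ≤ (4/9) * 1 :=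
          mul_le_mul heasy.le h2 (sq_nonneg _) (by norm_num)
        have h1c : (1 + C n)^2 ≤ 9/4 := fitch_aux_easy_sq h0 h1
        have hfac : (2*p-1)^2*(1+C n)^2 ≤ (4/9)*(9/4) :=
          mul_le_mul heasy.le h1c (sq_nonneg _) (by norm_num)
        refine ⟨?_, ?_, ?_⟩
        · linarith [sq_nonneg (C n - 1/3)]
        · linarith [mul_nonneg h0 (show (0:ℝ) ≤ 2 - 3*C n by linarith),
            mul_nonneg (sq_nonneg (2*p-1)) (sq_nonneg (D n))]
        · rw [hD n]
          calc ((2*p-1)*(1+C n)*D n)^2 = ((2*p-1)^2*(1+C n)^2)*(D n)^2 := by ring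
            _ ≤ 1*1 := by
                apply mul_le_mul (by linarith) h2 (sq_nonneg _) (by norm_num)
            _ = 1 := by norm_num
    have hstep : ∀ n, (D (n+1))^2 ≤ (9/4*(2*p-1)^2) * (D n)^2 := by
      intro n
      obtain ⟨h0, h1, h2⟩ := hinv n
      have h1c : (1 + C n)^2 ≤ 9/4 := fitch_aux_easy_sq h0 h1
      rw [hD n]
      calc ((2*p-1)*(1+C n)*D n)^2 = (1+C n)^2*((2*p-1)^2*(D n)^2) := by ring
        _ ≤ (9/4)*((2*p-1)^2*(D n)^2) :=
            mul_le_mul_of_nonneg_right h1c (by positivity)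
        _ = (9/4*(2*p-1)^2) * (D n)^2 := by ring
    have hgeom : ∀ n, (D n)^2 ≤ (9/4*(2*p-1)^2)^n := by
      intro n
      induction n with
      | zero => rw [hD0]; norm_num
      | succ n ih =>
        calc (D (n+1))^2 ≤ (9/4*(2*p-1)^2) * (D n)^2 := hstep n
          _ ≤ (9/4*(2*p-1)^2) * (9/4*(2*p-1)^2)^n :=
              mul_le_mul_of_nonneg_left ih (by positivity)
          _ = (9/4*(2*p-1)^2)^(n+1) := by ring
    refine squeeze_zero (fun n => sq_nonneg _) hgeom ?_
    refine tendsto_pow_atTop_nhds_zero_of_lt_one (by positivity) (by linarith)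
  · -- hard case : 4/9 ≤ (2p-1)^2 ≤ 9/16
    have hinv : ∀ n, C n ≤ 1/3 ∧
        3*(C n - 1/3)^2 ≤ (361/400)*(2*p-1)^2*(D n)^2 ∧ (D n)^2 ≤ 1 := by
      intro n
      induction n with
      | zero =>
        refine ⟨by rw [hC0]; norm_num, ?_, by rw [hD0]; norm_num⟩
        rw [hC0, hD0]; nlinarith
      | succ n ih =>
        obtain ⟨h1, h2, h3⟩ := ih
        have hc : C (n+1) - 1/3
            = (3*(C n - 1/3)^2 - (2*p-1)^2*(D n)^2)/2 := by
          linear_combination (hC n)/2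
        have hq : (0:ℝ) ≤ (2*p-1)^2*(D n)^2 := by positivity
        have htd : (2*p-1)^2*(D n)^2 ≤ (9/16) * 1 :=
          mul_le_mul hθsq h3 (sq_nonneg _) (by norm_num)
        have hxabs : (C n - 1/3)^2 ≤ 1083/6400 := by linarith
        have hclow : -(1/10 : ℝ) ≤ C n := by
          linarith [sq_nonneg (C n + 1/10)]
        have hD1 : (D (n+1))^2 = ((2*p-1)^2*(1+C n)^2)*(D n)^2 := by
          rw [hD n]; ring
        have h1c : (1 + C n)^2 ≤ 16/9 := fitch_aux_sq hclow h1
        have hfac : (2*p-1)^2*(1+C n)^2 ≤ (9/16)*(16/9) :=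
          mul_le_mul hθsq h1c (sq_nonneg _) (by norm_num)
        refine ⟨?_, ?_, ?_⟩
        · linarith
        · -- 3 (C' - 1/3)^2 ≤ (361/400) θ^2 (D')^2
          have key : (3:ℝ)*(D n)^2 ≤ (361/100)*(1 + C n)^2 :=
            fitch_aux_key hxabs h3
          have ha : 0 ≤ (2*p-1)^2*(D n)^2 - 3*(C n - 1/3)^2 := by linarith
          have hb : (2*p-1)^2*(D n)^2 - 3*(C n - 1/3)^2 ≤ (2*p-1)^2*(D n)^2 := by
            linarith [sq_nonneg (C n - 1/3)]
          have hsq : ((2*p-1)^2*(D n)^2 - 3*(C n - 1/3)^2)^2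
              ≤ ((2*p-1)^2*(D n)^2)^2 := pow_le_pow_left₀ ha hb 2
          have h4 : (0:ℝ) ≤ (2*p-1)^4*(D n)^2/4 := by positivity
          have h5 := mul_le_mul_of_nonneg_left key h4
          calc 3*(C (n+1) - 1/3)^2
              = (3/4)*((2*p-1)^2*(D n)^2 - 3*(C n - 1/3)^2)^2 := by rw [hc]; ring
            _ ≤ (3/4)*((2*p-1)^2*(D n)^2)^2 :=
                mul_le_mul_of_nonneg_left hsq (by norm_num)
            _ ≤ (361/400)*(2*p-1)^2*(D (n+1))^2 := by rw [hD1]; linarith [h5]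
        · rw [hD1]
          calc ((2*p-1)^2*(1+C n)^2)*(D n)^2 ≤ 1*1 :=
              mul_le_mul (by linarith) h3 (sq_nonneg _) (by norm_num)
            _ = 1 := by norm_num
    -- monotonicity of squares
    have hmono : ∀ n, (D (n+1))^2 ≤ (D n)^2 := by
      intro n
      obtain ⟨h1, h2, h3⟩ := hinv n
      have htd : (2*p-1)^2*(D n)^2 ≤ (9/16) * 1 :=
        mul_le_mul hθsq h3 (sq_nonneg _) (by norm_num)
      have hxabs : (C n - 1/3)^2 ≤ 1083/6400 := by linarith
      have hclow : -(1/10 : ℝ) ≤ C n := by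
        linarith [sq_nonneg (C n + 1/10)]
      have h1c : (1 + C n)^2 ≤ 16/9 := fitch_aux_sq hclow h1
      have hfac : (2*p-1)^2*(1+C n)^2 ≤ (9/16)*(16/9) :=
        mul_le_mul hθsq h1c (sq_nonneg _) (by norm_num)
      have hD1 : (D (n+1))^2 = ((2*p-1)^2*(1+C n)^2)*(D n)^2 := by
        rw [hD n]; ring
      rw [hD1]
      calc ((2*p-1)^2*(1+C n)^2)*(D n)^2 ≤ 1*(D n)^2 :=
          mul_le_mul_of_nonneg_right (by linarith) (sq_nonneg _)
        _ = (D n)^2 := by ring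
    -- key negativity : C (n+1) ≤ 1/3 - (13/600) D(n+1)^2
    have hneg : ∀ n, C (n+1) - 1/3 ≤ -(13/600)*(D (n+1))^2 := by
      intro n
      obtain ⟨h1, h2, h3⟩ := hinv n
      have hc : C (n+1) - 1/3
          = (3*(C n - 1/3)^2 - (2*p-1)^2*(D n)^2)/2 := by
        linear_combination (hC n)/2
      have hd1 : (D (n+1))^2 ≤ (D n)^2 := hmono n
      -- C(n+1) - 1/3 ≤ -(39/800) θ^2 (D n)^2 ≤ -(13/600)(D n)^2
      have ht49 : (4/9)*(D n)^2 ≤ (2*p-1)^2*(D n)^2 :=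
        mul_le_mul_of_nonneg_right hhard (sq_nonneg _)
      have h4 : C (n+1) - 1/3 ≤ -(13/600)*(D n)^2 := by linarith
      linarith
    -- decay inequality
    have hdec : ∀ n, (D (n+2))^2 ≤ (1 - (13/800)*(D (n+1))^2) * (D (n+1))^2 := by
      intro n
      have hng := hneg n
      obtain ⟨h1', h2', h3'⟩ := hinv (n+1)
      have htd : (2*p-1)^2*(D (n+1))^2 ≤ (9/16) * 1 :=
        mul_le_mul hθsq h3' (sq_nonneg _) (by norm_num)
      have hxabs : (C (n+1) - 1/3)^2 ≤ 1083/6400 := by linarith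
      have hclow : -(1/10 : ℝ) ≤ C (n+1) := by
        linarith [sq_nonneg (C (n+1) + 1/10)]
      have hBnn : 0 ≤ 1 + C (n+1) := by linarith
      have hB : 1 + C (n+1) ≤ 4/3 - (13/600)*(D (n+1))^2 := by linarith
      have h2s : (1 + C (n+1))^2 ≤ (4/3 - (13/600)*(D (n+1))^2)^2 :=
        pow_le_pow_left₀ hBnn hB 2
      have hfac : (2*p-1)^2*(1 + C (n+1))^2
          ≤ (1 - (13/800)*(D (n+1))^2)^2 := by
        have := mul_le_mul hθsq h2s (sq_nonneg _) (by norm_num)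
        linarith [this]
      have hXX : (D (n+1))^2*(D (n+1))^2 ≤ 1*(D (n+1))^2 :=
        mul_le_mul_of_nonneg_right h3' (sq_nonneg _)
      have hfac2 : (1 - (13/800)*(D (n+1))^2)^2 ≤ 1 - (13/800)*(D (n+1))^2 := by
        linarith [hXX, sq_nonneg (D (n+1))]
      have hD1 : (D (n+2))^2 = ((2*p-1)^2*(1 + C (n+1))^2)*(D (n+1))^2 := by
        rw [hD (n+1)]; ring
      rw [hD1]
      calc ((2*p-1)^2*(1 + C (n+1))^2)*(D (n+1))^2
          ≤ ((1 - (13/800)*(D (n+1))^2)^2)*(D (n+1))^2 :=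
            mul_le_mul_of_nonneg_right hfac (sq_nonneg _)
        _ ≤ (1 - (13/800)*(D (n+1))^2)*(D (n+1))^2 :=
            mul_le_mul_of_nonneg_right hfac2 (sq_nonneg _)
    -- limit argument
    set s : ℕ → ℝ := fun n => (D n)^2 with hsdef
    have hanti : Antitone s := antitone_nat_of_succ_le hmono
    have hbdd : BddBelow (Set.range s) := ⟨0, by rintro x ⟨n, rfl⟩; exact sq_nonneg _⟩
    have hL : Tendsto s atTop (nhds (⨅ n, s n)) := tendsto_atTop_ciInf hanti hbdd
    set L : ℝ := ⨅ n, s n with hLdef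
    have hL0 : 0 ≤ L := le_ciInf fun n => sq_nonneg _
    have hL1 : Tendsto (fun n => s (n+1)) atTop (nhds L) :=
      hL.comp (tendsto_add_atTop_nat 1)
    have hL2 : Tendsto (fun n => s (n+2)) atTop (nhds L) :=
      hL.comp (tendsto_add_atTop_nat 2)
    have hR : Tendsto (fun n => (1 - (13/800)*s (n+1)) * s (n+1)) atTop
        (nhds ((1 - (13/800)*L) * L)) :=
      ((tendsto_const_nhds.sub (tendsto_const_nhds.mul hL1)).mul hL1)
    have hle : L ≤ (1 - (13/800)*L) * L :=
      le_of_tendsto_of_tendsto' hL2 hR fun n => hdec n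
    have hLz : L = 0 := le_antisymm (by nlinarith [hle, hL0]) hL0
    rw [hLz] at hL
    exact hL
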